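/- Let A be analytic on the open unit disc 𝔻 and let ζ ∈ ∂𝔻. Suppose that for each δ > 0 there exists a non-trivial solution of f'' + A f = 0 having two distinct zeros in D(ζ,δ) ∩ 𝔻. Then there exists a sequence {wₙ} ⊂ 𝔻 with wₙ → ζ such that the sequence |A(wₙ)|(1−|wₙ|²)² has a limit c ∈ [1,∞], i.e. it either tends to +∞ or converges to a real number c ≥ 1. -/

import Mathlib

open Complex Metric Filter Topology

set_option maxHeartbeats 1600000000


private lemma sturm_aux {t₀ t₁ : ℝ} (h01 : t₀ < t₁) (h0 : 0 ≤ t₀) (h1 : t₁ < 1)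
    {n n₁ n₂ q : ℝ → ℝ} {ε : ℝ} (hε : 0 < ε)
    (hd1 : ∀ t ∈ Set.Icc t₀ t₁, HasDerivAt n (n₁ t) t)
    (hd2 : ∀ t ∈ Set.Icc t₀ t₁, HasDerivAt n₁ (n₂ t) t)
    (hpos : ∀ t ∈ Set.Ioo t₀ t₁, 0 < n t)
    (he0 : n t₀ = 0) (he1 : n t₁ = 0)
    (hkey : ∀ t ∈ Set.Ioo t₀ t₁, -(4 * q t * (n t)^2) ≤ 2 * n₂ t * n t - (n₁ t)^2)
    (hq : ∀ t ∈ Set.Ioo t₀ t₁, q t ≤ (1 - ε) / (1 - t^2)^2) : False := by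
  have hsub : Set.Ioo t₀ t₁ ⊆ Set.Icc t₀ t₁ := Set.Ioo_subset_Icc_self
  have hone : ∀ t ∈ Set.Icc t₀ t₁, 0 < 1 - t ^ 2 := by
    intro t ht
    have h1' : t ≤ t₁ := ht.2
    have h2' : 0 ≤ t := le_trans h0 ht.1
    nlinarith
  set u : ℝ → ℝ := fun t => Real.sqrt (n t) with hu_def
  set u₁ : ℝ → ℝ := fun t => n₁ t / (2 * Real.sqrt (n t)) with hu1_def
  set u₂ : ℝ → ℝ := fun t => (2 * n₂ t * n t - (n₁ t)^2) / (4 * n t * Real.sqrt (n t))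
    with hu2_def
  set v : ℝ → ℝ := fun t => Real.sqrt (1 - t ^ 2) with hv_def
  set v₁ : ℝ → ℝ := fun t => -t / Real.sqrt (1 - t ^ 2) with hv1_def
  set v₂ : ℝ → ℝ := fun t => -1 / ((1 - t ^ 2) * Real.sqrt (1 - t ^ 2)) with hv2_def
  have hvpos : ∀ t ∈ Set.Icc t₀ t₁, 0 < v t := fun t ht => Real.sqrt_pos.2 (hone t ht)
  have hinner : ∀ t : ℝ, HasDerivAt (fun t : ℝ => 1 - t ^ 2) (-(2 * t)) t := by
    intro t
    simpa using ((hasDerivAt_pow 2 t).const_sub 1)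
  have hv : ∀ t ∈ Set.Icc t₀ t₁, HasDerivAt v (v₁ t) t := by
    intro t ht
    have hs := Real.sqrt_pos.2 (hone t ht)
    have h := (hinner t).sqrt (ne_of_gt (hone t ht))
    convert h using 1
    simp only [hv1_def]
    field_simp
  have hv₁ : ∀ t ∈ Set.Icc t₀ t₁, HasDerivAt v₁ (v₂ t) t := by
    intro t ht
    have hs := Real.sqrt_pos.2 (hone t ht)
    have hd := hone t ht
    have hsq : Real.sqrt (1 - t ^ 2) * Real.sqrt (1 - t ^ 2) = 1 - t ^ 2 :=
      Real.mul_self_sqrt hd.le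
    have h := (hasDerivAt_neg t).div (hv t ht) (ne_of_gt hs)
    refine h.congr_deriv (Eq.symm ?_)
    simp only [hv2_def, hv1_def, hv_def]
    field_simp
    ring_nf
    rw [Real.sq_sqrt hd.le]
    ring
  have hu : ∀ t ∈ Set.Ioo t₀ t₁, HasDerivAt u (u₁ t) t := by
    intro t ht
    exact (hd1 t (hsub ht)).sqrt (ne_of_gt (hpos t ht))
  have hu₁ : ∀ t ∈ Set.Ioo t₀ t₁, HasDerivAt u₁ (u₂ t) t := by
    intro t ht
    have hnt := hpos t ht
    have hs := Real.sqrt_pos.2 hnt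
    have hsq : Real.sqrt (n t) * Real.sqrt (n t) = n t := Real.mul_self_sqrt hnt.le
    have hden : HasDerivAt (fun t => 2 * Real.sqrt (n t)) (2 * (n₁ t / (2 * Real.sqrt (n t)))) t :=
      ((hd1 t (hsub ht)).sqrt (ne_of_gt hnt)).const_mul 2
    have h := (hd2 t (hsub ht)).div hden (by positivity)
    refine h.congr_deriv (Eq.symm ?_)
    simp only [hu2_def]
    field_simp
    linear_combination (-4 * (n₁ t)^2) * hsq
  set W : ℝ → ℝ := fun t => u₁ t * v t - u t * v₁ t with hW_def
  have hW : ∀ t ∈ Set.Ioo t₀ t₁, HasDerivAt W (u₂ t * v t - u t * v₂ t) t := by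
    intro t ht
    have h := ((hu₁ t ht).mul (hv t (hsub ht))).sub ((hu t ht).mul (hv₁ t (hsub ht)))
    refine h.congr_deriv (Eq.symm ?_)
    ring
  have hWpos : ∀ t ∈ Set.Ioo t₀ t₁, 0 < u₂ t * v t - u t * v₂ t := by
    intro t ht
    have hnt := hpos t ht
    have hs := Real.sqrt_pos.2 hnt
    have hsq : Real.sqrt (n t) * Real.sqrt (n t) = n t := Real.mul_self_sqrt hnt.le
    have h1t := hone t (hsub ht)
    have hsv := Real.sqrt_pos.2 h1t
    have hsvq : Real.sqrt (1 - t ^ 2) * Real.sqrt (1 - t ^ 2) = 1 - t ^ 2 :=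
      Real.mul_self_sqrt h1t.le
    have hupos : 0 < u t := hs
    have hA : 0 ≤ u₂ t + q t * u t := by
      have h4 : (0:ℝ) < 4 * n t * Real.sqrt (n t) := by positivity
      have e : q t * u t = (4 * q t * (n t)^2) / (4 * n t * Real.sqrt (n t)) := by
        simp only [hu_def]
        field_simp
        linear_combination (q t) * hsq
      simp only [hu2_def] at *
      rw [e, ← add_div]
      apply div_nonneg _ h4.le
      have := hkey t ht
      linarith
    have hB : 0 < -(q t * v t) - v₂ t := by
      have hqt := hq t ht
      have key : q t * Real.sqrt (1 - t ^ 2) ≤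
          (1 - ε) / ((1 - t ^ 2) * Real.sqrt (1 - t ^ 2)) := by
        rw [le_div_iff₀ (by positivity)]
        calc q t * Real.sqrt (1 - t^2) * ((1 - t^2) * Real.sqrt (1 - t^2))
            = q t * (1 - t^2)^2 := by linear_combination (q t * (1 - t^2)) * hsvq
          _ ≤ (1 - ε) / (1 - t^2)^2 * (1-t^2)^2 :=
              mul_le_mul_of_nonneg_right hqt (by positivity)
          _ = 1 - ε := by field_simp
      have e2 : (1:ℝ) / ((1 - t ^ 2) * Real.sqrt (1 - t ^ 2))
          - (1 - ε) / ((1 - t ^ 2) * Real.sqrt (1 - t ^ 2))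
          = ε / ((1 - t ^ 2) * Real.sqrt (1 - t ^ 2)) := by
        rw [← sub_div]; ring_nf
      have hεd : 0 < ε / ((1 - t ^ 2) * Real.sqrt (1 - t ^ 2)) := by positivity
      simp only [hv2_def, hv_def]
      have : -1 / ((1 - t ^ 2) * Real.sqrt (1 - t ^ 2))
          = -(1 / ((1 - t ^ 2) * Real.sqrt (1 - t ^ 2))) := by ring
      rw [this]
      linarith
    nlinarith [mul_nonneg hA (hvpos t (hsub ht)).le, mul_pos hupos hB]
  -- the quotient G = u / v
  set G : ℝ → ℝ := fun t => u t / v t with hG_def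
  have hGd : ∀ t ∈ Set.Ioo t₀ t₁, HasDerivAt G (W t / (v t) ^ 2) t := by
    intro t ht
    have h := (hu t ht).div (hv t (hsub ht)) (ne_of_gt (hvpos t (hsub ht)))
    exact h
  have hGcont : ContinuousOn G (Set.Icc t₀ t₁) := by
    apply ContinuousOn.div
    · exact fun t ht => (Real.continuous_sqrt.continuousAt.comp
        (hd1 t ht).continuousAt).continuousWithinAt
    · exact fun t ht => ((Real.continuous_sqrt.continuousAt.comp
        (((hinner t)).continuousAt))).continuousWithinAt
    · exact fun t ht => ne_of_gt (hvpos t ht)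
  have hG0 : G t₀ = 0 := by simp [hG_def, hu_def, he0]
  have hG1 : G t₁ = 0 := by simp [hG_def, hu_def, he1]
  have hGpos : ∀ t ∈ Set.Ioo t₀ t₁, 0 < G t :=
    fun t ht => div_pos (Real.sqrt_pos.2 (hpos t ht)) (hvpos t (hsub ht))
  set s : ℝ := (t₀ + t₁) / 2 with hs_def
  have hsmem : s ∈ Set.Ioo t₀ t₁ := ⟨by simp only [hs_def]; linarith, by simp only [hs_def]; linarith⟩
  -- W is strictly monotone on closed subintervals of the open interval
  have hWmono : ∀ r₁ ∈ Set.Ioo t₀ t₁, ∀ r₂ ∈ Set.Ioo t₀ t₁, r₁ < r₂ → W r₁ < W r₂ := by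
    intro r₁ hr₁ r₂ hr₂ hlt
    have hIcc : Set.Icc r₁ r₂ ⊆ Set.Ioo t₀ t₁ := Set.Icc_subset _ hr₁ hr₂
    have := strictMonoOn_of_deriv_pos (convex_Icc r₁ r₂)
      (fun t ht => (hW t (hIcc ht)).continuousAt.continuousWithinAt)
      (fun t ht => by
        rw [interior_Icc] at ht
        rw [(hW t (hIcc (Set.Ioo_subset_Icc_self ht))).deriv]
        exact hWpos t (hIcc (Set.Ioo_subset_Icc_self ht)))
    exact this (Set.left_mem_Icc.2 hlt.le) (Set.right_mem_Icc.2 hlt.le) hlt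
  rcases le_or_gt 0 (W s) with hWs | hWs
  · -- G strictly increasing on [s, t₁], contradiction with G t₁ = 0
    have hmono := strictMonoOn_of_deriv_pos (convex_Icc s t₁)
      (hGcont.mono (Set.Icc_subset_Icc hsmem.1.le le_rfl))
      (fun t ht => by
        rw [interior_Icc] at ht
        have htIoo : t ∈ Set.Ioo t₀ t₁ := ⟨lt_trans hsmem.1 ht.1, ht.2⟩
        rw [(hGd t htIoo).deriv]
        apply div_pos _ (pow_pos (hvpos t (hsub htIoo)) 2)
        exact lt_of_le_of_lt hWs (hWmono s hsmem t htIoo ht.1))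
    have := hmono (Set.left_mem_Icc.2 hsmem.2.le) (Set.right_mem_Icc.2 hsmem.2.le) hsmem.2
    rw [hG1] at this
    exact absurd this (not_lt.2 (hGpos s hsmem).le)
  · -- G strictly decreasing on [t₀, s], contradiction with G t₀ = 0
    have hanti := strictAntiOn_of_deriv_neg (convex_Icc t₀ s)
      (hGcont.mono (Set.Icc_subset_Icc le_rfl hsmem.2.le))
      (fun t ht => by
        rw [interior_Icc] at ht
        have htIoo : t ∈ Set.Ioo t₀ t₁ := ⟨ht.1, lt_trans ht.2 hsmem.2⟩
        rw [(hGd t htIoo).deriv]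
        apply div_neg_of_neg_of_pos _ (pow_pos (hvpos t (hsub htIoo)) 2)
        exact lt_trans (hWmono t htIoo s hsmem ht.2) hWs)
    have := hanti (Set.left_mem_Icc.2 hsmem.1.le) (Set.right_mem_Icc.2 hsmem.1.le) hsmem.1
    rw [hG0] at this
    exact absurd this (not_lt.2 (hGpos s hsmem).le)


private lemma normSq_identity (a μ z : ℂ) (hμ : μ * (starRingEnd ℂ) μ = 1) :
    Complex.normSq (1 + ((starRingEnd ℂ) a * μ) * z) - Complex.normSq (a + μ * z)
      = (1 - Complex.normSq a) * (1 - Complex.normSq z) := by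
  have h : ((Complex.normSq (1 + ((starRingEnd ℂ) a * μ) * z) : ℂ))
      - (Complex.normSq (a + μ * z) : ℂ)
      = ((1 - Complex.normSq a : ℝ) : ℂ) * ((1 - Complex.normSq z : ℝ) : ℂ) := by
    push_cast
    rw [← Complex.mul_conj, ← Complex.mul_conj, ← Complex.mul_conj, ← Complex.mul_conj]
    simp only [map_add, map_mul, map_one, Complex.conj_conj]
    linear_combination (a * (starRingEnd ℂ) a * z * (starRingEnd ℂ) z
      - z * (starRingEnd ℂ) z) * hμ
  have := congrArg Complex.re h
  simpa using this

private lemma one_sub_ne (u v : ℂ) (hu : ‖u‖ < 1) (hv : ‖v‖ < 1) :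
    (1:ℂ) - u * v ≠ 0 := by
  intro h0
  have h1 : u * v = 1 := by linear_combination -h0
  have := congrArg norm h1
  rw [norm_mul, norm_one] at this
  nlinarith [norm_nonneg u, norm_nonneg v]

private lemma key_lemma (A : ℂ → ℂ)
    (ζ : ℂ) (hζ : ‖ζ‖ = 1)
    (hyp : ∀ δ : ℝ, 0 < δ → ∃ f : ℂ → ℂ,
      AnalyticOnNhd ℂ f (ball (0:ℂ) 1) ∧
      (∀ z ∈ ball (0:ℂ) 1, deriv (deriv f) z + A z * f z = 0) ∧
      ¬ (∀ z ∈ ball (0:ℂ) 1, f z = 0) ∧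
      ∃ z₁ ∈ ball ζ δ ∩ ball (0:ℂ) 1, ∃ z₂ ∈ ball ζ δ ∩ ball (0:ℂ) 1,
        z₁ ≠ z₂ ∧ f z₁ = 0 ∧ f z₂ = 0)
    (δ₀ ε : ℝ) (hδ₀ : 0 < δ₀) (hε : 0 < ε)
    (hbound : ∀ w ∈ ball ζ δ₀ ∩ ball (0:ℂ) 1,
        ‖A w‖ * (1 - ‖w‖ ^ 2) ^ 2 ≤ 1 - ε) : False := by
  obtain ⟨f, hf, hODE, hfnz, a, hz₁, z₂, hz₂, hne, hfz₁, hfz₂⟩ := hyp (δ₀/4) (by positivity)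
  -- basic facts about z₁ z₂
  have hz₁b : ‖a‖ < 1 := by
    have := hz₁.2; rwa [mem_ball, Complex.dist_eq, sub_zero] at this
  have hz₂b : ‖z₂‖ < 1 := by
    have := hz₂.2; rwa [mem_ball, Complex.dist_eq, sub_zero] at this
  have hz₁ζ : ‖a - ζ‖ < δ₀/4 := by
    have := hz₁.1; rwa [mem_ball, Complex.dist_eq] at this
  have hz₂ζ : ‖z₂ - ζ‖ < δ₀/4 := by
    have := hz₂.1; rwa [mem_ball, Complex.dist_eq] at this
  have hnsa : Complex.normSq a < 1 := by
    rw [← Complex.sq_norm] at *; nlinarith [norm_nonneg a, hz₁b]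
  have hnsa' : 0 < 1 - Complex.normSq a := by linarith
  -- the pseudo-hyperbolic data
  set d : ℂ := 1 - (starRingEnd ℂ) a * z₂ with hd_def
  have hdne : d ≠ 0 := by
    intro h0
    have h1 : (starRingEnd ℂ) a * z₂ = 1 := by
      have : (1 : ℂ) - (starRingEnd ℂ) a * z₂ = 0 := h0
      linear_combination -this
    have := congrArg norm h1
    rw [norm_mul, Complex.norm_conj, norm_one] at this
    nlinarith [norm_nonneg a, norm_nonneg z₂, hz₁b, hz₂b]
  set b : ℂ := (z₂ - a) / d with hb_def
  have hbne : b ≠ 0 := div_ne_zero (sub_ne_zero.2 (Ne.symm hne)) hdne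
  set x : ℝ := ‖b‖ with hx_def
  have hx0 : 0 < x := norm_pos_iff.mpr hbne
  -- |b| < 1 via the fundamental identity
  have hiden : Complex.normSq d - Complex.normSq (a - z₂)
      = (1 - Complex.normSq a) * (1 - Complex.normSq z₂) := by
    have := normSq_identity a (-1) z₂ (by simp)
    have e1 : 1 + (starRingEnd ℂ) a * -1 * z₂ = d := by rw [hd_def]; ring
    have e2 : a + -1 * z₂ = a - z₂ := by ring
    rw [e1, e2] at this
    exact this
  have hnsz₂ : Complex.normSq z₂ < 1 := by
    rw [← Complex.sq_norm]; nlinarith [norm_nonneg z₂]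
  have hx1 : x < 1 := by
    have hnsb : Complex.normSq b < 1 := by
      rw [hb_def, Complex.normSq_div]
      rw [div_lt_one (Complex.normSq_pos.2 hdne)]
      have h1 : Complex.normSq (z₂ - a) = Complex.normSq (a - z₂) := by
        rw [show z₂ - a = -(a - z₂) by ring, Complex.normSq_neg]
      rw [h1]
      nlinarith [hiden, hnsa, hnsz₂]
    rw [hx_def]
    nlinarith [norm_nonneg b, Complex.sq_norm b, hnsb]
  -- the rotation μ and the Möbius map φ
  set μ : ℂ := b / (x:ℂ) with hμ_def
  have hxne : (x:ℂ) ≠ 0 := by exact_mod_cast hx0.ne'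
  have hμabs : ‖μ‖ = 1 := by
    rw [hμ_def, norm_div, Complex.norm_real, Real.norm_eq_abs, abs_of_pos hx0, ← hx_def, div_self hx0.ne']
  have hμ : μ * (starRingEnd ℂ) μ = 1 := by
    rw [Complex.mul_conj]
    rw [Complex.normSq_eq_norm_sq, hμabs]
    norm_num
  have hμne : μ ≠ 0 := by
    intro h; rw [h, norm_zero] at hμabs; norm_num at hμabs
  set c : ℂ := (starRingEnd ℂ) a * μ with hc_def
  have hcabs : ‖c‖ = ‖a‖ := by
    rw [hc_def, norm_mul, Complex.norm_conj, hμabs, mul_one]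
  set D : ℂ → ℂ := fun z => 1 + c * z with hD_def
  have hD : ∀ z ∈ ball (0:ℂ) 1, D z ≠ 0 := by
    intro z hz h0
    have hzb : ‖z‖ < 1 := by
      rwa [mem_ball, Complex.dist_eq, sub_zero] at hz
    have : c * z = -1 := by linear_combination h0
    have := congrArg norm this
    rw [norm_mul, hcabs] at this
    simp at this
    nlinarith [norm_nonneg z, norm_nonneg a, hz₁b]
  set φ : ℂ → ℂ := fun z => (a + μ * z) / D z with hφ_def
  -- normSq identity specialised
  have hkey_id : ∀ z : ℂ, Complex.normSq (D z) - Complex.normSq (a + μ * z)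
      = (1 - Complex.normSq a) * (1 - Complex.normSq z) := by
    intro z
    have := normSq_identity a μ z hμ
    simpa [hD_def, hc_def] using this
  have hφmem : ∀ z ∈ ball (0:ℂ) 1, φ z ∈ ball (0:ℂ) 1 := by
    intro z hz
    have hzb : Complex.normSq z < 1 := by
      rw [← Complex.sq_norm]
      have : ‖z‖ < 1 := by rwa [mem_ball, Complex.dist_eq, sub_zero] at hz
      nlinarith [norm_nonneg z]
    have hDz := hD z hz
    have hDpos : 0 < Complex.normSq (D z) := Complex.normSq_pos.2 hDz
    have : Complex.normSq (φ z) < 1 := by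
      rw [hφ_def]
      simp only []
      rw [Complex.normSq_div]
      rw [div_lt_one hDpos]
      nlinarith [hkey_id z, hnsa']
    rw [mem_ball, Complex.dist_eq, sub_zero]
    nlinarith [norm_nonneg (φ z), Complex.sq_norm (φ z)]
  -- derivative facts
  set k : ℂ := μ - a * c with hk_def
  have hk : k = μ * (1 - (Complex.normSq a : ℂ)) := by
    have hma : a * (starRingEnd ℂ) a = (Complex.normSq a : ℂ) := Complex.mul_conj a
    rw [hk_def, hc_def]
    linear_combination -μ * hma
  have hkabs : ‖k‖ = 1 - Complex.normSq a := by
    rw [hk]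
    rw [norm_mul, hμabs, one_mul]
    rw [show ((1:ℂ) - (Complex.normSq a : ℂ)) = ((1 - Complex.normSq a : ℝ) : ℂ) by push_cast; ring]
    rw [Complex.norm_real, Real.norm_eq_abs, abs_of_pos hnsa']
  have hkne : k ≠ 0 := by
    intro h0; rw [h0, norm_zero] at hkabs; linarith
  set dφ : ℂ → ℂ := fun z => k / (D z)^2 with hdφ_def
  set B : ℂ → ℂ := fun z => A (φ z) * (dφ z)^2 with hB_def
  have hDd : ∀ z : ℂ, HasDerivAt D c z := by
    intro z
    have := ((hasDerivAt_id z).const_mul c).const_add (1:ℂ)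
    exact this.congr_deriv (mul_one c)
  have hφd : ∀ z ∈ ball (0:ℂ) 1, HasDerivAt φ (dφ z) z := by
    intro z hz
    have hnum : HasDerivAt (fun z : ℂ => a + μ * z) μ z := by
      have := ((hasDerivAt_id z).const_mul μ).const_add a
      simpa using this
    have h := hnum.div (hDd z) (hD z hz)
    refine h.congr_deriv (Eq.symm ?_)
    rw [hdφ_def]
    simp only []
    rw [div_eq_div_iff (pow_ne_zero _ (hD z hz)) (pow_ne_zero _ (hD z hz))]
    simp only [hD_def, hk_def]
    ring
  have hf' : AnalyticOnNhd ℂ (deriv f) (ball (0:ℂ) 1) := hf.deriv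
  have hfd : ∀ w ∈ ball (0:ℂ) 1, HasDerivAt f (deriv f w) w :=
    fun w hw => ((hf w hw).differentiableAt).hasDerivAt
  have hf'd : ∀ w ∈ ball (0:ℂ) 1, HasDerivAt (deriv f) (deriv (deriv f) w) w :=
    fun w hw => ((hf' w hw).differentiableAt).hasDerivAt
  have hODE' : ∀ w ∈ ball (0:ℂ) 1, deriv (deriv f) w = -(A w * f w) :=
    fun w hw => eq_neg_of_add_eq_zero_left (hODE w hw)
  set h : ℂ → ℂ := fun z => f (φ z) * D z with hh_def
  set dh : ℂ → ℂ := fun z => deriv f (φ z) * (k / D z) + c * f (φ z) with hdh_def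
  have hcomp : ∀ z ∈ ball (0:ℂ) 1,
      HasDerivAt (fun z => f (φ z)) (deriv f (φ z) * dφ z) z := by
    intro z hz
    exact HasDerivAt.comp z (hfd _ (hφmem z hz)) (hφd z hz)
  have hhd : ∀ z ∈ ball (0:ℂ) 1, HasDerivAt h (dh z) z := by
    intro z hz
    have hprod := (hcomp z hz).mul (hDd z)
    refine hprod.congr_deriv (Eq.symm ?_)
    rw [hdh_def, hdφ_def]
    simp only []
    field_simp [hD z hz]
  have hdhd : ∀ z ∈ ball (0:ℂ) 1, HasDerivAt dh (-(B z * h z)) z := by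
    intro z hz
    have t1 : HasDerivAt (fun z => deriv f (φ z)) (deriv (deriv f) (φ z) * dφ z) z :=
      HasDerivAt.comp z (hf'd _ (hφmem z hz)) (hφd z hz)
    have t2 : HasDerivAt (fun z => k / D z) ((0 * D z - k * c) / (D z)^2) z :=
      (hasDerivAt_const z k).div (hDd z) (hD z hz)
    have t3 : HasDerivAt (fun z => c * f (φ z)) (c * (deriv f (φ z) * dφ z)) z :=
      (hcomp z hz).const_mul c
    have hsum := (t1.mul t2).add t3
    refine hsum.congr_deriv (Eq.symm ?_)
    rw [hODE' _ (hφmem z hz)]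
    rw [hB_def, hh_def, hdφ_def]
    simp only []
    field_simp [hD z hz]
    ring
  -- zeros of h
  have hφ0 : φ 0 = a := by
    rw [hφ_def, hD_def]; simp
  have hxball : ((x:ℝ):ℂ) ∈ ball (0:ℂ) 1 := by
    rw [mem_ball, Complex.dist_eq, sub_zero, Complex.norm_real, Real.norm_eq_abs, abs_of_pos hx0]
    exact hx1
  have hμx : μ * (x:ℂ) = b := by
    rw [hμ_def]; field_simp
  have hφx : φ (x:ℝ) = z₂ := by
    have e := hD _ hxball
    have hdne' : (1:ℂ) - (starRingEnd ℂ) a * z₂ ≠ 0 := by rw [← hd_def]; exact hdne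
    rw [hφ_def]
    simp only []
    rw [div_eq_iff e, hD_def, hc_def]
    simp only []
    rw [mul_assoc ((starRingEnd ℂ) a) μ ((x:ℝ):ℂ), hμx, hb_def, hd_def]
    have hdne'' : (1:ℂ) - z₂ * (starRingEnd ℂ) a ≠ 0 := by rw [mul_comm]; exact hdne'
    field_simp
    ring
  have hh0 : h 0 = 0 := by
    rw [hh_def]; simp only []; rw [hφ0, hfz₁, zero_mul]
  have hhx : h (x:ℝ) = 0 := by
    rw [hh_def]; simp only []; rw [hφx, hfz₂, zero_mul]
  -- analyticity of h
  have hDana : AnalyticOnNhd ℂ D (ball (0:ℂ) 1) := by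
    rw [hD_def]
    exact analyticOnNhd_const.add (analyticOnNhd_const.mul analyticOnNhd_id)
  have hφana : AnalyticOnNhd ℂ φ (ball (0:ℂ) 1) := by
    rw [hφ_def]
    exact (analyticOnNhd_const.add (analyticOnNhd_const.mul analyticOnNhd_id)).div hDana hD
  have hhana : AnalyticOnNhd ℂ h (ball (0:ℂ) 1) := by
    rw [hh_def]
    exact (hf.comp hφana fun z hz => hφmem z hz).mul hDana
  -- a point where h is nonzero
  push_neg at hfnz
  obtain ⟨z₀, hz₀mem, hz₀ne⟩ := hfnz
  have hz₀b : ‖z₀‖ < 1 := by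
    rwa [mem_ball, Complex.dist_eq, sub_zero] at hz₀mem
  have hz₀den : (1:ℂ) - (starRingEnd ℂ) a * z₀ ≠ 0 := by
    apply one_sub_ne
    · rwa [Complex.norm_conj]
    · exact hz₀b
  set w₀ : ℂ := (z₀ - a) / (μ * (1 - (starRingEnd ℂ) a * z₀)) with hw₀_def
  have hw₀mem : w₀ ∈ ball (0:ℂ) 1 := by
    have hid := normSq_identity a (-1) z₀ (by simp)
    have e1 : 1 + (starRingEnd ℂ) a * -1 * z₀ = 1 - (starRingEnd ℂ) a * z₀ := by ring
    have e2 : a + -1 * z₀ = a - z₀ := by ring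
    rw [e1, e2] at hid
    have hnsz₀ : Complex.normSq z₀ < 1 := by
      rw [← Complex.sq_norm]; nlinarith [norm_nonneg z₀]
    have hlt : Complex.normSq (z₀ - a) < Complex.normSq (1 - (starRingEnd ℂ) a * z₀) := by
      have : Complex.normSq (z₀ - a) = Complex.normSq (a - z₀) := by
        rw [show z₀ - a = -(a - z₀) by ring, Complex.normSq_neg]
      rw [this]
      nlinarith [hid, hnsa', hnsz₀]
    have hnsw : Complex.normSq w₀ < 1 := by
      rw [hw₀_def, Complex.normSq_div, Complex.normSq_mul]
      rw [show Complex.normSq μ = 1 by rw [← Complex.sq_norm, hμabs]; norm_num, one_mul]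
      rw [div_lt_one (Complex.normSq_pos.2 hz₀den)]
      exact hlt
    rw [mem_ball, Complex.dist_eq, sub_zero]
    nlinarith [norm_nonneg w₀, Complex.sq_norm w₀]
  have hφw₀ : φ w₀ = z₀ := by
    have e := hD _ hw₀mem
    rw [hφ_def]
    simp only []
    rw [div_eq_iff e, hD_def, hc_def]
    simp only []
    rw [hw₀_def]
    have hz₀den' : (1:ℂ) - z₀ * (starRingEnd ℂ) a ≠ 0 := by rw [mul_comm]; exact hz₀den
    field_simp
    ring
  have hhw₀ : h w₀ ≠ 0 := by
    rw [hh_def]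
    simp only []
    rw [hφw₀]
    exact mul_ne_zero hz₀ne (hD _ hw₀mem)
  -- isolated zero at x, and the nearest zero below x
  have hne_ev : ∀ᶠ z in 𝓝[≠] ((x:ℝ):ℂ), h z ≠ 0 := by
    rcases (hhana _ hxball).eventually_eq_zero_or_eventually_ne_zero with hcase | hcase
    · exact absurd ((hhana.eqOn_zero_of_preconnected_of_eventuallyEq_zero
        (convex_ball (0:ℂ) 1).isPreconnected hxball hcase) hw₀mem) hhw₀
    · exact hcase
  rw [eventually_nhdsWithin_iff, Metric.eventually_nhds_iff] at hne_ev
  obtain ⟨η, hη0, hη⟩ := hne_ev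
  have hreal : ∀ t : ℝ, t ≠ x → |t - x| < η → h ↑t ≠ 0 := by
    intro t htne hdist
    apply hη
    · rw [Complex.dist_eq, ← Complex.ofReal_sub, Complex.norm_real, Real.norm_eq_abs]
      exact hdist
    · simp only [Set.mem_compl_iff, Set.mem_singleton_iff]
      exact_mod_cast htne
  have hηx : η ≤ x := by
    by_contra hgt
    push_neg at hgt
    refine hreal 0 (ne_of_lt hx0) ?_ ?_
    · rw [abs_of_nonpos (by linarith)]; linarith
    · rw [Complex.ofReal_zero]; exact hh0
  set S : Set ℝ := {t | t ∈ Set.Icc 0 x ∧ h ↑t = 0 ∧ t < x} with hS_def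
  have h0S : (0:ℝ) ∈ S := by
    refine ⟨⟨le_refl 0, hx0.le⟩, ?_, hx0⟩
    rw [Complex.ofReal_zero]; exact hh0
  have hSb : BddAbove S := ⟨x, fun s hs => hs.1.2⟩
  set t₀ : ℝ := sSup S with ht₀_def
  have hub : ∀ s ∈ S, s ≤ x - η := by
    intro s hs
    by_contra hgt
    push_neg at hgt
    refine hreal s (ne_of_lt hs.2.2) ?_ hs.2.1
    rw [abs_of_nonpos (by linarith [hs.2.2])]
    linarith
  have ht₀le : t₀ ≤ x - η := csSup_le ⟨0, h0S⟩ hub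
  have ht₀0 : 0 ≤ t₀ := le_csSup hSb h0S
  have ht₀x : t₀ < x := by linarith
  have htball : ∀ t : ℝ, t ∈ Set.Icc t₀ x → ((t:ℝ):ℂ) ∈ ball (0:ℂ) 1 := by
    intro t ht
    rw [mem_ball, Complex.dist_eq, sub_zero, Complex.norm_real, Real.norm_eq_abs,
      _root_.abs_of_nonneg (le_trans ht₀0 ht.1)]
    exact lt_of_le_of_lt ht.2 hx1
  have ht₀zero : h ↑t₀ = 0 := by
    by_contra hne0
    have hcont : ContinuousAt (fun t : ℝ => h ↑t) t₀ :=
      ((hhana _ (htball t₀ ⟨le_refl _, ht₀x.le⟩)).continuousAt).comp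
        Complex.continuous_ofReal.continuousAt
    have hev : ∀ᶠ t : ℝ in 𝓝 t₀, h (↑t : ℂ) ≠ 0 := hcont.eventually_ne hne0
    rw [Metric.eventually_nhds_iff] at hev
    obtain ⟨r, hr0, hr⟩ := hev
    obtain ⟨s, hsS, hs⟩ := exists_lt_of_lt_csSup ⟨0, h0S⟩
      (show t₀ - r < sSup S by rw [← ht₀_def]; linarith)
    have hsle : s ≤ t₀ := le_csSup hSb hsS
    refine hr (show dist s t₀ < r from ?_) hsS.2.1
    rw [Real.dist_eq, abs_of_nonpos (by linarith)]
    linarith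
  have hmid : ∀ t : ℝ, t₀ < t → t < x → h ↑t ≠ 0 := by
    intro t h1 h2 h0
    have : t ∈ S := ⟨⟨by linarith, by linarith⟩, h0, h2⟩
    have := le_csSup hSb this
    linarith
  -- real-restricted derivatives of normSq (h t)
  have hd1 : ∀ t ∈ Set.Icc t₀ x, HasDerivAt (fun s : ℝ => Complex.normSq (h ↑s))
      (2 * (((starRingEnd ℂ) (h ↑t)) * dh ↑t).re) t := by
    intro t ht
    have hbl := htball t ht
    have hH : HasDerivAt (fun s : ℝ => h ↑s) (dh ↑t) t := (hhd _ hbl).comp_ofReal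
    have hre : HasDerivAt (fun s : ℝ => (h ↑s).re) ((dh ↑t).re) t := by
      have := Complex.reCLM.hasFDerivAt.comp_hasDerivAt t hH
      simpa [Function.comp_def] using this
    have him : HasDerivAt (fun s : ℝ => (h ↑s).im) ((dh ↑t).im) t := by
      have := Complex.imCLM.hasFDerivAt.comp_hasDerivAt t hH
      simpa [Function.comp_def] using this
    have hsum := (hre.mul hre).add (him.mul him)
    have heq : (fun s : ℝ => Complex.normSq (h ↑s))
        = fun s : ℝ => (h ↑s).re * (h ↑s).re + (h ↑s).im * (h ↑s).im := by
      funext s; rw [Complex.normSq_apply]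
    rw [heq]
    refine hsum.congr_deriv (Eq.symm ?_)
    simp only [Complex.mul_re, Complex.conj_re, Complex.conj_im]
    ring
  have hd2 : ∀ t ∈ Set.Icc t₀ x,
      HasDerivAt (fun s : ℝ => 2 * (((starRingEnd ℂ) (h ↑s)) * dh ↑s).re)
      (2 * Complex.normSq (dh ↑t)
        + 2 * (((starRingEnd ℂ) (h ↑t)) * -(B ↑t * h ↑t)).re) t := by
    intro t ht
    have hbl := htball t ht
    have hH : HasDerivAt (fun s : ℝ => h ↑s) (dh ↑t) t := (hhd _ hbl).comp_ofReal
    have hH' : HasDerivAt (fun s : ℝ => dh ↑s) (-(B ↑t * h ↑t)) t := (hdhd _ hbl).comp_ofReal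
    have hre : HasDerivAt (fun s : ℝ => (h ↑s).re) ((dh ↑t).re) t := by
      have := Complex.reCLM.hasFDerivAt.comp_hasDerivAt t hH
      simpa [Function.comp_def] using this
    have him : HasDerivAt (fun s : ℝ => (h ↑s).im) ((dh ↑t).im) t := by
      have := Complex.imCLM.hasFDerivAt.comp_hasDerivAt t hH
      simpa [Function.comp_def] using this
    have hre' : HasDerivAt (fun s : ℝ => (dh ↑s).re) ((-(B ↑t * h ↑t)).re) t := by
      have := Complex.reCLM.hasFDerivAt.comp_hasDerivAt t hH'
      simpa [Function.comp_def] using this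
    have him' : HasDerivAt (fun s : ℝ => (dh ↑s).im) ((-(B ↑t * h ↑t)).im) t := by
      have := Complex.imCLM.hasFDerivAt.comp_hasDerivAt t hH'
      simpa [Function.comp_def] using this
    have hsum := ((hre.mul hre').add (him.mul him')).const_mul (2:ℝ)
    have heq : (fun s : ℝ => 2 * (((starRingEnd ℂ) (h ↑s)) * dh ↑s).re)
        = fun s : ℝ => 2 * ((h ↑s).re * (dh ↑s).re + (h ↑s).im * (dh ↑s).im) := by
      funext s
      simp only [Complex.mul_re, Complex.conj_re, Complex.conj_im]
      ring
    rw [heq]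
    refine hsum.congr_deriv (Eq.symm ?_)
    simp only [Complex.normSq_apply, Complex.mul_re, Complex.conj_re, Complex.conj_im]
    ring
  have hpos : ∀ t ∈ Set.Ioo t₀ x, 0 < Complex.normSq (h (↑t:ℂ)) :=
    fun t ht => Complex.normSq_pos.2 (hmid t ht.1 ht.2)
  have he0 : Complex.normSq (h ((t₀:ℝ):ℂ)) = 0 := by
    rw [Complex.normSq_eq_zero]; exact ht₀zero
  have he1 : Complex.normSq (h ((x:ℝ):ℂ)) = 0 := by
    rw [Complex.normSq_eq_zero]; exact hhx
  -- the key pointwise inequality from Cauchy-Schwarz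
  have hkeyIneq : ∀ t ∈ Set.Ioo t₀ x,
      -(4 * ‖B ↑t‖ * (Complex.normSq (h (↑t:ℂ)))^2)
        ≤ 2 * (2 * Complex.normSq (dh ↑t)
            + 2 * (((starRingEnd ℂ) (h ↑t)) * -(B ↑t * h ↑t)).re) * Complex.normSq (h (↑t:ℂ))
          - (2 * (((starRingEnd ℂ) (h ↑t)) * dh ↑t).re)^2 := by
    intro t ht
    set wt : ℂ := h ↑t with hwt
    set wt' : ℂ := dh ↑t with hwt'
    set bt : ℂ := B ↑t with hbt
    have hCS : (((starRingEnd ℂ) wt) * wt').re ^ 2 ≤ Complex.normSq wt * Complex.normSq wt' := by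
      have h1 : (((starRingEnd ℂ) wt) * wt').re ^ 2 ≤ Complex.normSq ((starRingEnd ℂ) wt * wt') := by
        rw [Complex.normSq_apply]
        nlinarith [sq_nonneg (((starRingEnd ℂ) wt) * wt').im]
      rwa [Complex.normSq_mul, Complex.normSq_conj] at h1
    have hBre : (((starRingEnd ℂ) wt) * -(bt * wt)).re = -(bt.re * Complex.normSq wt) := by
      have hmc := Complex.mul_conj wt
      have e : ((starRingEnd ℂ) wt) * -(bt * wt) = -(bt * ((Complex.normSq wt : ℝ) : ℂ)) := by
        linear_combination -bt * hmc
      rw [e]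
      simp [Complex.mul_re]
    have habs : bt.re ≤ ‖bt‖ := Complex.re_le_norm bt
    have hn0 : (0:ℝ) ≤ Complex.normSq wt := Complex.normSq_nonneg wt
    have hmm : bt.re * (Complex.normSq wt)^2 ≤ ‖bt‖ * (Complex.normSq wt)^2 :=
      mul_le_mul_of_nonneg_right habs (sq_nonneg _)
    rw [hBre]
    linarith [hCS, hmm, Complex.normSq_nonneg wt']
  -- the coefficient bound via the geometry of the geodesic
  have hF9 : ∀ t : ℝ, t ∈ Set.Icc 0 x →
      ‖B ↑t‖ * (1 - t^2)^2 ≤ 1 - ε := by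
    intro t ht
    have htb : ((t:ℝ):ℂ) ∈ ball (0:ℂ) 1 := by
      rw [mem_ball, Complex.dist_eq, sub_zero, Complex.norm_real, Real.norm_eq_abs, _root_.abs_of_nonneg ht.1]
      exact lt_of_le_of_lt ht.2 hx1
    have hDt := hD _ htb
    have hDx := hD _ hxball
    have hNpos : 0 < Complex.normSq (D ↑t) := Complex.normSq_pos.2 hDt
    have hNxpos : 0 < Complex.normSq (D ((x:ℝ):ℂ)) := Complex.normSq_pos.2 hDx
    have habsDt : 0 < ‖D ↑t‖ := norm_pos_iff.mpr hDt
    have habsDx : 0 < ‖D ((x:ℝ):ℂ)‖ := norm_pos_iff.mpr hDx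
    have hφtb := hφmem _ htb
    have hnst : Complex.normSq ((t:ℝ):ℂ) = t^2 := by
      rw [Complex.normSq_ofReal]; ring
    have hnsx : Complex.normSq ((x:ℝ):ℂ) = x^2 := by
      rw [Complex.normSq_ofReal]; ring
    -- identity: 1 - |φ t|² = (1 - |a|²)(1 - t²)/N
    have E0 : ‖φ ↑t‖^2 = Complex.normSq (a + μ * ↑t) / Complex.normSq (D ↑t) := by
      rw [Complex.sq_norm, hφ_def]
      simp only []
      rw [Complex.normSq_div]
    have E1 : 1 - ‖φ ↑t‖^2
        = (1 - Complex.normSq a) * (1 - t^2) / Complex.normSq (D ↑t) := by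
      rw [E0, one_sub_div hNpos.ne', hkey_id (↑t), hnst]
    have E2 : ‖B ↑t‖
        = ‖A (φ ↑t)‖ * (1 - Complex.normSq a)^2 / (Complex.normSq (D ↑t))^2 := by
      have edφ : ‖dφ ↑t‖ = (1 - Complex.normSq a) / Complex.normSq (D ↑t) := by
        rw [hdφ_def]
        simp only []
        rw [norm_div, hkabs, norm_pow, Complex.sq_norm]
      rw [hB_def]
      simp only []
      rw [norm_mul, norm_pow, edφ, div_pow]
      ring
    -- the geodesic stays close to ζ
    have hG1 : φ ↑t - a = ↑t * k / D ↑t := by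
      rw [hφ_def]
      simp only []
      rw [eq_div_iff hDt, sub_mul, div_mul_cancel₀ _ hDt, hD_def, hk_def, hc_def]
      ring
    have hG1x : φ ((x:ℝ):ℂ) - a = ↑x * k / D ((x:ℝ):ℂ) := by
      rw [hφ_def]
      simp only []
      rw [eq_div_iff hDx, sub_mul, div_mul_cancel₀ _ hDx, hD_def, hk_def, hc_def]
      ring
    have habs1 : ‖φ ↑t - a‖
        = t * (1 - Complex.normSq a) / ‖D ↑t‖ := by
      rw [hG1, norm_div, norm_mul, hkabs, Complex.norm_real, Real.norm_eq_abs, _root_.abs_of_nonneg ht.1]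
    have habs1x : ‖z₂ - a‖
        = x * (1 - Complex.normSq a) / ‖D ((x:ℝ):ℂ)‖ := by
      rw [← hφx, hG1x, norm_div, norm_mul, hkabs, Complex.norm_real, Real.norm_eq_abs, _root_.abs_of_nonneg hx0.le]
    have hNt : Complex.normSq (D ↑t) = 1 + 2*t*c.re + t^2 * Complex.normSq c := by
      rw [hD_def]
      simp only []
      simp only [Complex.normSq_apply, Complex.add_re, Complex.add_im, Complex.mul_re,
        Complex.mul_im, Complex.ofReal_re, Complex.ofReal_im, Complex.one_re, Complex.one_im]
      ring
    have hNx : Complex.normSq (D ((x:ℝ):ℂ)) = 1 + 2*x*c.re + x^2 * Complex.normSq c := by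
      rw [hD_def]
      simp only []
      simp only [Complex.normSq_apply, Complex.add_re, Complex.add_im, Complex.mul_re,
        Complex.mul_im, Complex.ofReal_re, Complex.ofReal_im, Complex.one_re, Complex.one_im]
      ring
    have hcre : -1 ≤ c.re := by
      have h1 : |c.re| ≤ ‖a‖ := by rw [← hcabs]; exact Complex.abs_re_le_norm c
      have h2 := neg_abs_le c.re
      linarith
    have hsqmono : t * ‖D ((x:ℝ):ℂ)‖ ≤ x * ‖D ↑t‖ := by
      have ht2 : (t * ‖D ((x:ℝ):ℂ)‖)^2 ≤ (x * ‖D ↑t‖)^2 := by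
        rw [mul_pow, mul_pow, Complex.sq_norm (D ((x:ℝ):ℂ)), Complex.sq_norm (D ((t:ℝ):ℂ)), hNt, hNx]
        have hxt : 0 ≤ x * t := mul_nonneg (le_trans ht.1 ht.2) ht.1
        have hkey1 : 0 ≤ x * t * (c.re + 1) := mul_nonneg hxt (by linarith)
        have hkey2 : 0 ≤ x * (1 - t) := mul_nonneg (le_trans ht.1 ht.2)
          (by linarith [lt_of_le_of_lt ht.2 hx1])
        have hkey3 : 0 ≤ t * (1 - x) := mul_nonneg ht.1 (by linarith)
        have key : 0 ≤ (x - t) * (x + t + 2*x*t*c.re) :=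
          mul_nonneg (by linarith [ht.2]) (by linarith)
        linarith [key]
      have hp : 0 ≤ t * ‖D ((x:ℝ):ℂ)‖ := mul_nonneg ht.1 habsDx.le
      have hq' : 0 ≤ x * ‖D ↑t‖ := mul_nonneg (le_trans ht.1 ht.2) habsDt.le
      exact (pow_le_pow_iff_left₀ hp hq' (by norm_num)).1 ht2
    have hmono2 : ‖φ ↑t - a‖ ≤ ‖z₂ - a‖ := by
      rw [habs1, habs1x, div_le_div_iff₀ habsDt habsDx]
      have := mul_le_mul_of_nonneg_left hsqmono hnsa'.le
      linarith [this]
    have hφtζ : φ ↑t ∈ ball ζ δ₀ := by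
      rw [mem_ball, Complex.dist_eq]
      have T1 : ‖φ ↑t - ζ‖ ≤ ‖φ ↑t - a‖ + ‖a - ζ‖ :=
        norm_sub_le_norm_sub_add_norm_sub _ _ _
      have T2 : ‖z₂ - a‖ ≤ ‖z₂ - ζ‖ + ‖ζ - a‖ :=
        norm_sub_le_norm_sub_add_norm_sub _ _ _
      have T3 : ‖ζ - a‖ = ‖a - ζ‖ := norm_sub_rev ζ a
      linarith [hmono2, hz₁ζ, hz₂ζ]
    have hg := hbound (φ ↑t) ⟨hφtζ, hφtb⟩
    rw [E1] at hg
    rw [E2]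
    calc ‖A (φ ↑t)‖ * (1 - Complex.normSq a)^2 / (Complex.normSq (D ↑t))^2
          * (1 - t^2)^2
        = ‖A (φ ↑t)‖
          * ((1 - Complex.normSq a) * (1 - t^2) / Complex.normSq (D ↑t))^2 := by
          field_simp
      _ ≤ 1 - ε := hg
  have hqB : ∀ t ∈ Set.Ioo t₀ x, ‖B ↑t‖ ≤ (1 - ε) / (1 - t^2)^2 := by
    intro t ht
    have ht' : t ∈ Set.Icc 0 x := ⟨le_trans ht₀0 ht.1.le, ht.2.le⟩
    have h1t : 0 < 1 - t^2 := by nlinarith [ht'.1, lt_of_le_of_lt ht'.2 hx1]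
    rw [le_div_iff₀ (by positivity)]
    exact hF9 t ht'
  exact sturm_aux ht₀x ht₀0 hx1 hε hd1 hd2 hpos he0 he1 hkeyIneq hqB
/-- If for each `δ > 0` the equation `f'' + A f = 0` (with `A` analytic on `𝔻`)
has a non-trivial analytic solution with two distinct zeros in `D(ζ,δ) ∩ 𝔻`, where
`ζ ∈ ∂𝔻`, then there is a sequence `wₙ → ζ` in `𝔻` along which `|A(wₙ)|(1−|wₙ|²)²`
tends to `+∞` or converges to some real `c ≥ 1`. -/
theorem stmt_1 (A : ℂ → ℂ) (hA : AnalyticOnNhd ℂ A (ball (0:ℂ) 1))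
    (ζ : ℂ) (hζ : ‖ζ‖ = 1)
    (hyp : ∀ δ : ℝ, 0 < δ → ∃ f : ℂ → ℂ,
      AnalyticOnNhd ℂ f (ball (0:ℂ) 1) ∧
      (∀ z ∈ ball (0:ℂ) 1, deriv (deriv f) z + A z * f z = 0) ∧
      ¬ (∀ z ∈ ball (0:ℂ) 1, f z = 0) ∧
      ∃ z₁ ∈ ball ζ δ ∩ ball (0:ℂ) 1, ∃ z₂ ∈ ball ζ δ ∩ ball (0:ℂ) 1,
        z₁ ≠ z₂ ∧ f z₁ = 0 ∧ f z₂ = 0) :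
    ∃ w : ℕ → ℂ, (∀ n, w n ∈ ball (0:ℂ) 1) ∧ Tendsto w atTop (𝓝 ζ) ∧
      (Tendsto (fun n => ‖A (w n)‖ * (1 - ‖w n‖ ^ 2) ^ 2)
          atTop atTop ∨
        ∃ c : ℝ, 1 ≤ c ∧
          Tendsto (fun n => ‖A (w n)‖ * (1 - ‖w n‖ ^ 2) ^ 2)
            atTop (𝓝 c)) := by
  have KEY : ∀ n : ℕ, ∃ w ∈ ball ζ (1/((n:ℝ)+1)) ∩ ball (0:ℂ) 1,
      1 - 1/((n:ℝ)+1) < ‖A w‖ * (1 - ‖w‖ ^ 2) ^ 2 := by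
    intro n
    by_contra hcon
    push_neg at hcon
    exact key_lemma A ζ hζ hyp (1/((n:ℝ)+1)) (1/((n:ℝ)+1)) (by positivity) (by positivity) hcon
  choose w hw hgt using KEY
  have hwball : ∀ n, w n ∈ ball (0:ℂ) 1 := fun n => (hw n).2
  have hwζ : Tendsto w atTop (𝓝 ζ) := by
    rw [tendsto_iff_dist_tendsto_zero]
    have hb : ∀ n : ℕ, dist (w n) ζ ≤ 1/((n:ℝ)+1) := fun n => (mem_ball.mp (hw n).1).le
    exact squeeze_zero (fun n => dist_nonneg) hb tendsto_one_div_add_atTop_nhds_zero_nat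
  set g : ℕ → ℝ := fun n => ‖A (w n)‖ * (1 - ‖w n‖ ^ 2) ^ 2 with hg
  have hg0 : ∀ n, 0 ≤ g n := fun n => mul_nonneg (norm_nonneg _) (sq_nonneg _)
  by_cases hbd : ∃ M : ℝ, ∀ n, g n ≤ M
  · obtain ⟨M, hM⟩ := hbd
    obtain ⟨c, _, φ, hφmono, hφtend⟩ :=
      (isCompact_Icc (a := (0:ℝ)) (b := M)).tendsto_subseq (fun n => ⟨hg0 n, hM n⟩)
    refine ⟨w ∘ φ, fun n => hwball _, hwζ.comp hφmono.tendsto_atTop, Or.inr ⟨c, ?_, hφtend⟩⟩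
    have h0 : Tendsto (fun n : ℕ => 1/((φ n : ℝ)+1)) atTop (𝓝 0) :=
      tendsto_one_div_add_atTop_nhds_zero_nat.comp hφmono.tendsto_atTop
    have h1 : Tendsto (fun n : ℕ => 1 - 1/((φ n : ℝ)+1)) atTop (𝓝 1) := by
      simpa using tendsto_const_nhds.sub h0
    exact le_of_tendsto_of_tendsto' h1 hφtend (fun n => (hgt (φ n)).le)
  · push_neg at hbd
    have hfreq : ∀ m : ℕ, ∃ᶠ k in atTop, (m:ℝ) < g k := by
      intro m
      rw [Filter.frequently_atTop]
      intro N
      by_contra hno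
      push_neg at hno
      set M₀ : ℝ := ((Finset.range (N+1)).image g).max' (by simp) with hM₀
      obtain ⟨n₀, hn₀⟩ := hbd (max (m:ℝ) M₀)
      rcases le_or_gt N n₀ with hc1 | hc1
      · exact absurd (hno n₀ hc1) (not_le.2 (lt_of_le_of_lt (le_max_left _ _) hn₀))
      · have : g n₀ ≤ M₀ := Finset.le_max' _ _
          (Finset.mem_image_of_mem g (Finset.mem_range.2 (by omega)))
        exact absurd this (not_le.2 (lt_of_le_of_lt (le_max_right _ _) hn₀))
    obtain ⟨φ, hφmono, hφP⟩ := Filter.extraction_forall_of_frequently hfreq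
    refine ⟨w ∘ φ, fun n => hwball _, hwζ.comp hφmono.tendsto_atTop, Or.inl ?_⟩
    exact tendsto_atTop_mono (fun n => (hφP n).le) tendsto_natCast_atTop_atTop
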